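/- Let χ > 0. For every ε > 0 there exists C > 0 such that for all t ≥ 0, the function f(t) = 8πχ(-log(√(t² + 8πχ) − t) + t/(√(t² + 8πχ) − t)) satisfies f(t) ≤ (2+ε)t² + C. (Note √(t²+8πχ) − t > 0 for all t ∈ ℝ.) -/

import Mathlib

theorem stmt1 (χ : ℝ) (hχ : 0 < χ) (ε : ℝ) (hε : 0 < ε) :
    ∃ C : ℝ, 0 < C ∧ ∀ t : ℝ, 0 ≤ t →
      8 * Real.pi * χ *
          (-Real.log (Real.sqrt (t ^ 2 + 8 * Real.pi * χ) - t) +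
            t / (Real.sqrt (t ^ 2 + 8 * Real.pi * χ) - t)) ≤
        (2 + ε) * t ^ 2 + C := by
  have hπ := Real.pi_pos
  set a : ℝ := 8 * Real.pi * χ with ha
  have hA : 0 < a := by positivity
  set c : ℝ := a / (2 * ε) with hc
  have hC : 0 < c := by positivity
  refine ⟨|a * Real.log 2 + ε * a + (a/2) * Real.log c - a * Real.log a + a/2| + 1,
    by positivity, ?_⟩
  intro t ht
  set s := Real.sqrt (t ^ 2 + a) with hs
  have hs2 : s ^ 2 = t ^ 2 + a := Real.sq_sqrt (by positivity)
  have hsnn : 0 ≤ s := Real.sqrt_nonneg _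
  have hts : t < s := by nlinarith
  have hst : 0 < s - t := by linarith
  have hsp : 0 < s + t := by linarith
  have hprod : (s - t) * (s + t) = a := by nlinarith
  have hdiv : a * (t / (s - t)) = t * (s + t) := by
    field_simp
    nlinarith
  have hlog1 : Real.log (s - t) = Real.log a - Real.log (s + t) := by
    rw [← hprod, Real.log_mul (ne_of_gt hst) (ne_of_gt hsp)]; ring
  have hlog2 : Real.log (s + t) ≤ Real.log 2 + Real.log s := by
    rw [← Real.log_mul two_ne_zero (by linarith)]
    exact Real.log_le_log (by linarith) (by linarith)
  have hlogs : Real.log s = (1/2) * Real.log (t ^ 2 + a) := by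
    rw [hs, Real.log_sqrt (by positivity)]; ring
  have hlog3 : Real.log (t ^ 2 + a) ≤ (t ^ 2 + a) / c + Real.log c := by
    have h := Real.log_le_sub_one_of_pos (show (0:ℝ) < (t ^ 2 + a) / c by positivity)
    rw [Real.log_div (by positivity) (ne_of_gt hC)] at h
    linarith
  have hts2 : t * s ≤ t ^ 2 + a / 2 := by nlinarith [sq_nonneg (t - s)]
  have key : a * (-Real.log (s - t) + t / (s - t)) ≤
      (2 + ε) * t ^ 2 + (a * Real.log 2 + ε * a + (a/2) * Real.log c - a * Real.log a + a/2) := by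
    have hε2 : a / (2 * c) = ε := by rw [hc]; field_simp
    rw [mul_add, hdiv, hlog1]
    have h4 : a * Real.log (s + t) ≤ a * Real.log 2 + (a/2) * Real.log (t ^ 2 + a) := by
      have h' := mul_le_mul_of_nonneg_left hlog2 hA.le
      rw [hlogs] at h'; nlinarith
    have h5 : (a/2) * Real.log (t ^ 2 + a) ≤ ε * (t ^ 2 + a) + (a/2) * Real.log c := by
      have h6 := mul_le_mul_of_nonneg_left hlog3 (by positivity : (0:ℝ) ≤ a/2)
      have h7 : (a/2) * ((t ^ 2 + a) / c) = ε * (t ^ 2 + a) := by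
        rw [← hε2]; field_simp
      nlinarith
    have h8 : t * (s + t) = t * s + t ^ 2 := by ring
    have h9 : a * -(Real.log a - Real.log (s + t)) = a * Real.log (s + t) - a * Real.log a := by ring
    linarith
  calc a * (-Real.log (s - t) + t / (s - t)) ≤ _ := key
    _ ≤ (2 + ε) * t ^ 2 + (|a * Real.log 2 + ε * a + (a/2) * Real.log c - a * Real.log a + a/2| + 1) := by
      have := le_abs_self (a * Real.log 2 + ε * a + (a/2) * Real.log c - a * Real.log a + a/2)
      linarith
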